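/- (Similarity lower bound for the attention module.) Let N, D ≥ 1, let R > 1 and R₂ ≥ 0, and let W, W_V ∈ ℝ^{D×D} and X, X̃ ∈ ℝ^{N×D} satisfy ‖W‖ ≤ R, ‖W_V‖ ≤ R, ‖X‖ ≤ R, ‖X̃‖ ≤ R, and ‖X − X̃‖ ≤ R₂ in spectral norm. Define the self-attention map F(X) = D(X)^{-1} · A(X) · X W_V with A(X)_{i,j} = exp((X W Xᵀ)_{i,j}) and D(X) the diagonal matrix of row sums of A(X), and set Y = F(X), Ỹ = F(X̃). Assume ‖Y‖_F = ‖Ỹ‖_F = 1. Then the cosine similarity satisfies f(Y, Ỹ) = tr[Yᵀ Ỹ] ≥ 1 − (1/2)·(5 R⁴ N D)² · R₂² · min{N, D}. In particular, setting α = (1/2)·(5 R⁴ N D)²·R₂²·min{N,D}, the similarity between the attention outputs at two consecutive diffusion steps is at least 1 − α. -/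

import Mathlib

noncomputable def specNorm {m n : ℕ} (A : Matrix (Fin m) (Fin n) ℝ) : ℝ :=
  ‖LinearMap.toContinuousLinearMap (Matrix.toEuclideanLin A)‖

noncomputable def frobNorm {m n : ℕ} (A : Matrix (Fin m) (Fin n) ℝ) : ℝ :=
  Real.sqrt (∑ i, ∑ j, (A i j) ^ 2)

/-- Self-attention: `F(X) = D(X)⁻¹ · A(X) · (X · W_V)` with `A(X)ᵢⱼ = exp((X W Xᵀ)ᵢⱼ)`
and `D(X)` the diagonal matrix of row sums of `A(X)`. -/
noncomputable def attn {N D : ℕ} (W WV : Matrix (Fin D) (Fin D) ℝ)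
    (X : Matrix (Fin N) (Fin D) ℝ) : Matrix (Fin N) (Fin D) ℝ :=
  (Matrix.diagonal fun i => ∑ j, Real.exp ((X * W * X.transpose) i j))⁻¹ *
    (Matrix.of fun i j => Real.exp ((X * W * X.transpose) i j)) * (X * WV)

open Finset
open scoped Matrix.Norms.L2Operator

section SpecLemmas

lemma specNorm_eq {m n : ℕ} (A : Matrix (Fin m) (Fin n) ℝ) : specNorm A = ‖A‖ := rfl

lemma specNorm_nonneg {m n : ℕ} (A : Matrix (Fin m) (Fin n) ℝ) : 0 ≤ specNorm A := by
  rw [specNorm_eq]; exact norm_nonneg _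

lemma specNorm_transpose {m n : ℕ} (A : Matrix (Fin m) (Fin n) ℝ) :
    specNorm A.transpose = specNorm A := by
  rw [specNorm_eq, specNorm_eq, ← Matrix.l2_opNorm_conjTranspose A,
    Matrix.conjTranspose_eq_transpose_of_trivial]

lemma specNorm_mul_le {m n p : ℕ} (A : Matrix (Fin m) (Fin n) ℝ) (B : Matrix (Fin n) (Fin p) ℝ) :
    specNorm (A * B) ≤ specNorm A * specNorm B := by
  simp only [specNorm_eq]; exact Matrix.l2_opNorm_mul A B

lemma sum_sq_mulVec_le {m n : ℕ} (A : Matrix (Fin m) (Fin n) ℝ) (v : Fin n → ℝ) :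
    ∑ i, (A.mulVec v i) ^ 2 ≤ specNorm A ^ 2 * (∑ j, (v j) ^ 2) := by
  have h := Matrix.l2_opNorm_mulVec A ((WithLp.equiv 2 (Fin n → ℝ)).symm v)
  have h1 : ‖(EuclideanSpace.equiv (Fin m) ℝ).symm (A.mulVec ((WithLp.equiv 2 (Fin n → ℝ)).symm v))‖
      = Real.sqrt (∑ i, (A.mulVec v i) ^ 2) := by
    rw [EuclideanSpace.norm_eq]
    congr 1
    refine Finset.sum_congr rfl fun i _ => ?_
    show ‖A.mulVec v i‖ ^ 2 = _
    rw [Real.norm_eq_abs, sq_abs]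
  have h2 : ‖((WithLp.equiv 2 (Fin n → ℝ)).symm v : EuclideanSpace ℝ (Fin n))‖
      = Real.sqrt (∑ j, (v j) ^ 2) := by
    rw [EuclideanSpace.norm_eq]
    congr 1
    refine Finset.sum_congr rfl fun i _ => ?_
    show ‖v i‖ ^ 2 = _
    rw [Real.norm_eq_abs, sq_abs]
  rw [h1, h2] at h
  have hnn : (0:ℝ) ≤ ∑ i, (A.mulVec v i) ^ 2 := Finset.sum_nonneg fun i _ => sq_nonneg _
  have hnn2 : (0:ℝ) ≤ ∑ j, (v j) ^ 2 := Finset.sum_nonneg fun i _ => sq_nonneg _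
  calc ∑ i, (A.mulVec v i) ^ 2 = Real.sqrt (∑ i, (A.mulVec v i) ^ 2) ^ 2 := (Real.sq_sqrt hnn).symm
    _ ≤ (‖A‖ * Real.sqrt (∑ j, (v j) ^ 2)) ^ 2 := by
        apply pow_le_pow_left₀ (Real.sqrt_nonneg _) h
    _ = specNorm A ^ 2 * ∑ j, (v j) ^ 2 := by
        rw [mul_pow, Real.sq_sqrt hnn2, specNorm_eq]

end SpecLemmas

section FrobLemmas

lemma frobNorm_nonneg {m n : ℕ} (A : Matrix (Fin m) (Fin n) ℝ) : 0 ≤ frobNorm A :=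
  Real.sqrt_nonneg _

lemma sum_sq_nonneg' {m n : ℕ} (A : Matrix (Fin m) (Fin n) ℝ) :
    0 ≤ ∑ i, ∑ j, (A i j) ^ 2 :=
  Finset.sum_nonneg fun _ _ => Finset.sum_nonneg fun _ _ => sq_nonneg _

lemma frobNorm_sq {m n : ℕ} (A : Matrix (Fin m) (Fin n) ℝ) :
    frobNorm A ^ 2 = ∑ i, ∑ j, (A i j) ^ 2 :=
  Real.sq_sqrt (sum_sq_nonneg' A)

lemma frobNorm_le_of_sq_le {m n : ℕ} {A : Matrix (Fin m) (Fin n) ℝ} {c : ℝ} (hc : 0 ≤ c)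
    (h : ∑ i, ∑ j, (A i j) ^ 2 ≤ c ^ 2) : frobNorm A ≤ c := by
  rw [frobNorm, show c = Real.sqrt (c ^ 2) from (Real.sqrt_sq hc).symm]
  exact Real.sqrt_le_sqrt h

lemma sq_le_of_frobNorm_le {m n : ℕ} {A : Matrix (Fin m) (Fin n) ℝ} {c : ℝ}
    (h : frobNorm A ≤ c) : ∑ i, ∑ j, (A i j) ^ 2 ≤ c ^ 2 := by
  rw [← frobNorm_sq]
  exact pow_le_pow_left₀ (frobNorm_nonneg A) h 2

lemma frobNorm_transpose {m n : ℕ} (A : Matrix (Fin m) (Fin n) ℝ) :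
    frobNorm A.transpose = frobNorm A := by
  rw [frobNorm, frobNorm, Finset.sum_comm]
  rfl

lemma frobNorm_mul_le_right {m n p : ℕ} (A : Matrix (Fin m) (Fin n) ℝ)
    (B : Matrix (Fin n) (Fin p) ℝ) : frobNorm (A * B) ≤ frobNorm A * specNorm B := by
  apply frobNorm_le_of_sq_le (mul_nonneg (frobNorm_nonneg A) (specNorm_nonneg B))
  rw [mul_pow, frobNorm_sq]
  calc ∑ i, ∑ j, ((A * B) i j) ^ 2
      = ∑ i, ∑ j, (B.transpose.mulVec (A i) j) ^ 2 := by
        refine Finset.sum_congr rfl fun i _ => Finset.sum_congr rfl fun j _ => ?_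
        congr 1
        rw [Matrix.mul_apply, Matrix.mulVec, dotProduct]
        exact Finset.sum_congr rfl fun k _ => by rw [Matrix.transpose_apply, mul_comm]
    _ ≤ ∑ i, specNorm B.transpose ^ 2 * (∑ k, (A i k) ^ 2) := by
        exact Finset.sum_le_sum fun i _ => sum_sq_mulVec_le B.transpose (A i)
    _ = (∑ i, ∑ k, (A i k) ^ 2) * specNorm B ^ 2 := by
        rw [← Finset.mul_sum, specNorm_transpose, mul_comm]

lemma frobNorm_mul_le_left {m n p : ℕ} (A : Matrix (Fin m) (Fin n) ℝ)
    (B : Matrix (Fin n) (Fin p) ℝ) : frobNorm (A * B) ≤ specNorm A * frobNorm B := by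
  have h : (A * B).transpose = B.transpose * A.transpose := by
    rw [Matrix.transpose_mul]
  calc frobNorm (A * B) = frobNorm (B.transpose * A.transpose) := by
        rw [← h, frobNorm_transpose]
    _ ≤ frobNorm B.transpose * specNorm A.transpose := frobNorm_mul_le_right _ _
    _ = specNorm A * frobNorm B := by rw [frobNorm_transpose, specNorm_transpose, mul_comm]

lemma frobNorm_le_sqrt_col {m n : ℕ} (A : Matrix (Fin m) (Fin n) ℝ) :
    frobNorm A ≤ Real.sqrt (n:ℝ) * specNorm A := by
  have hcol : ∑ i, ∑ j, (A i j) ^ 2 ≤ (n:ℝ) * specNorm A ^ 2 := by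
    rw [Finset.sum_comm]
    calc ∑ j, ∑ i, (A i j) ^ 2
        = ∑ j : Fin n, ∑ i, (A.mulVec (Pi.single j 1) i) ^ 2 := by
          refine Finset.sum_congr rfl fun j _ => Finset.sum_congr rfl fun i _ => ?_
          rw [Matrix.mulVec_single]
          simp
      _ ≤ ∑ j : Fin n, specNorm A ^ 2 * (∑ k, (Pi.single j (1:ℝ) k) ^ 2) := by
          exact Finset.sum_le_sum fun j _ => sum_sq_mulVec_le A _
      _ = ∑ _j : Fin n, specNorm A ^ 2 := by
          refine Finset.sum_congr rfl fun j _ => ?_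
          simp [Pi.single_apply]
      _ = (n:ℝ) * specNorm A ^ 2 := by
          rw [Finset.sum_const, Finset.card_univ, Fintype.card_fin, nsmul_eq_mul]
  apply frobNorm_le_of_sq_le (mul_nonneg (Real.sqrt_nonneg _) (specNorm_nonneg _))
  rw [mul_pow, Real.sq_sqrt (Nat.cast_nonneg n)]
  exact hcol

lemma frobNorm_le_sqrt_min {m n : ℕ} (A : Matrix (Fin m) (Fin n) ℝ) :
    frobNorm A ≤ Real.sqrt (min (m:ℝ) (n:ℝ)) * specNorm A := by
  rcases le_total (m:ℝ) (n:ℝ) with h | h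
  · rw [min_eq_left h, ← frobNorm_transpose A, ← specNorm_transpose A]
    exact frobNorm_le_sqrt_col A.transpose
  · rw [min_eq_right h]
    exact frobNorm_le_sqrt_col A

lemma frobNorm_eq_norm {m n : ℕ} (A : Matrix (Fin m) (Fin n) ℝ) :
    frobNorm A = ‖(WithLp.equiv 2 (Fin m × Fin n → ℝ)).symm
      (fun p : Fin m × Fin n => A p.1 p.2)‖ := by
  rw [EuclideanSpace.norm_eq, frobNorm]
  congr 1
  rw [show (∑ p : Fin m × Fin n, ‖(WithLp.equiv 2 (Fin m × Fin n → ℝ)).symm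
      (fun q : Fin m × Fin n => A q.1 q.2) p‖ ^ 2)
      = ∑ p : Fin m × Fin n, (A p.1 p.2) ^ 2 from Finset.sum_congr rfl fun p _ => by
        rw [show ‖(WithLp.equiv 2 (Fin m × Fin n → ℝ)).symm
          (fun q : Fin m × Fin n => A q.1 q.2) p‖ = ‖A p.1 p.2‖ from rfl,
          Real.norm_eq_abs, sq_abs],
    Fintype.sum_prod_type]

lemma frobNorm_add_le {m n : ℕ} (A B : Matrix (Fin m) (Fin n) ℝ) :
    frobNorm (A + B) ≤ frobNorm A + frobNorm B := by
  rw [frobNorm_eq_norm, frobNorm_eq_norm, frobNorm_eq_norm]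
  have : (WithLp.equiv 2 (Fin m × Fin n → ℝ)).symm (fun p : Fin m × Fin n => (A + B) p.1 p.2)
      = (WithLp.equiv 2 (Fin m × Fin n → ℝ)).symm (fun p : Fin m × Fin n => A p.1 p.2)
        + (WithLp.equiv 2 (Fin m × Fin n → ℝ)).symm (fun p : Fin m × Fin n => B p.1 p.2) := rfl
  rw [this]
  exact norm_add_le _ _

end FrobLemmas

section Softmax

/-- The row-softmax of a matrix. -/
noncomputable def smax {N M : ℕ} (ρ : Matrix (Fin N) (Fin M) ℝ) : Matrix (Fin N) (Fin M) ℝ :=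
  Matrix.of fun i j => Real.exp (ρ i j) / ∑ k, Real.exp (ρ i k)

lemma smax_nonneg {N M : ℕ} (ρ : Matrix (Fin N) (Fin M) ℝ) (i : Fin N) (j : Fin M) :
    0 ≤ smax ρ i j :=
  div_nonneg (Real.exp_pos _).le (Finset.sum_nonneg fun _ _ => (Real.exp_pos _).le)

lemma smax_row_sum {N M : ℕ} [NeZero M] (ρ : Matrix (Fin N) (Fin M) ℝ) (i : Fin N) :
    ∑ j, smax ρ i j = 1 := by
  have hT : 0 < ∑ k, Real.exp (ρ i k) :=
    Finset.sum_pos (fun k _ => Real.exp_pos _) univ_nonempty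
  simp only [smax, Matrix.of_apply]
  rw [← Finset.sum_div, div_self (ne_of_gt hT)]

lemma softmax_coord_lip {M : ℕ} [NeZero M] (a b : Fin M → ℝ) (j : Fin M) (L : ℝ)
    (hL : ∀ k, |a k - b k| ≤ L) :
    |Real.exp (a j) / (∑ k, Real.exp (a k)) - Real.exp (b j) / (∑ k, Real.exp (b k))|
      ≤ |a j - b j| + L := by
  set Δ : Fin M → ℝ := fun k => a k - b k with hΔ
  set f : ℝ → ℝ := fun t => Real.exp (b j + t * Δ j) / ∑ k, Real.exp (b k + t * Δ k) with hf
  have hT : ∀ t : ℝ, 0 < ∑ k, Real.exp (b k + t * Δ k) := fun t =>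
    Finset.sum_pos (fun k _ => Real.exp_pos _) univ_nonempty
  have hL0 : 0 ≤ L := le_trans (abs_nonneg _) (hL j)
  have hderiv : ∀ t : ℝ, HasDerivAt f
      ((Δ j * Real.exp (b j + t * Δ j) * (∑ k, Real.exp (b k + t * Δ k))
        - Real.exp (b j + t * Δ j) * (∑ k, Δ k * Real.exp (b k + t * Δ k)))
        / (∑ k, Real.exp (b k + t * Δ k)) ^ 2) t := by
    intro t
    have hnum : HasDerivAt (fun t => Real.exp (b j + t * Δ j))
        (Δ j * Real.exp (b j + t * Δ j)) t := by
      have h1 : HasDerivAt (fun t : ℝ => b j + t * Δ j) (Δ j) t := by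
        simpa using ((hasDerivAt_id t).mul_const (Δ j)).const_add (b j)
      simpa [mul_comm] using h1.exp
    have hden : HasDerivAt (fun t => ∑ k, Real.exp (b k + t * Δ k))
        (∑ k, Δ k * Real.exp (b k + t * Δ k)) t := by
      apply HasDerivAt.fun_sum
      intro k _
      have h1 : HasDerivAt (fun t : ℝ => b k + t * Δ k) (Δ k) t := by
        simpa using ((hasDerivAt_id t).mul_const (Δ k)).const_add (b k)
      simpa [mul_comm] using h1.exp
    exact hnum.div hden (ne_of_gt (hT t))
  have hbound : ∀ t : ℝ,
      |(Δ j * Real.exp (b j + t * Δ j) * (∑ k, Real.exp (b k + t * Δ k))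
        - Real.exp (b j + t * Δ j) * (∑ k, Δ k * Real.exp (b k + t * Δ k)))
        / (∑ k, Real.exp (b k + t * Δ k)) ^ 2| ≤ |Δ j| + L := by
    intro t
    set T := ∑ k, Real.exp (b k + t * Δ k) with hTdef
    set e := Real.exp (b j + t * Δ j) with he
    have hTpos := hT t
    have heT : e ≤ T := by
      rw [hTdef, he]
      exact Finset.single_le_sum (f := fun k => Real.exp (b k + t * Δ k))
        (fun k _ => (Real.exp_pos _).le) (mem_univ j)
    have he0 : 0 < e := Real.exp_pos _
    rw [abs_div, abs_of_pos (pow_pos hTpos 2)]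
    rw [div_le_iff₀ (pow_pos hTpos 2)]
    have h1 : |Δ j * e * T - e * ∑ k, Δ k * Real.exp (b k + t * Δ k)|
        ≤ |Δ j| * e * T + e * (L * T) := by
      refine le_trans (abs_sub _ _) ?_
      gcongr
      · rw [abs_mul, abs_mul, abs_of_pos he0, abs_of_pos hTpos]
      · rw [abs_mul, abs_of_pos he0]
        gcongr
        refine le_trans (Finset.abs_sum_le_sum_abs _ _) ?_
        rw [hTdef, Finset.mul_sum]
        refine Finset.sum_le_sum fun k _ => ?_
        rw [abs_mul, abs_of_pos (Real.exp_pos _)]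
        exact mul_le_mul_of_nonneg_right (hL k) (Real.exp_pos _).le
    refine le_trans h1 ?_
    nlinarith [mul_nonneg (mul_nonneg (abs_nonneg (Δ j)) hTpos.le) (sub_nonneg.2 heT),
      mul_nonneg (mul_nonneg hL0 hTpos.le) (sub_nonneg.2 heT)]
  have key : |f 1 - f 0| ≤ (|Δ j| + L) * 1 := by
    have := norm_image_sub_le_of_norm_deriv_le_segment'
      (f := f)
      (f' := fun t => (Δ j * Real.exp (b j + t * Δ j) * (∑ k, Real.exp (b k + t * Δ k))
        - Real.exp (b j + t * Δ j) * (∑ k, Δ k * Real.exp (b k + t * Δ k)))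
        / (∑ k, Real.exp (b k + t * Δ k)) ^ 2)
      (a := 0) (b := 1)
      (fun t _ => (hderiv t).hasDerivWithinAt)
      (fun t _ => hbound t) 1 (Set.right_mem_Icc.2 zero_le_one)
    simpa using this
  have hf1 : f 1 = Real.exp (a j) / ∑ k, Real.exp (a k) := by
    rw [hf]
    simp only [one_mul, hΔ]
    norm_num
  have hf0 : f 0 = Real.exp (b j) / ∑ k, Real.exp (b k) := by
    rw [hf]
    norm_num
  rw [hf1, hf0] at key
  simpa using key

lemma softmax_frob_lip {N M : ℕ} [NeZero M] (ρ ρ' : Matrix (Fin N) (Fin M) ℝ) :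
    frobNorm (smax ρ - smax ρ') ≤ 2 * Real.sqrt M * frobNorm (ρ - ρ') := by
  apply frobNorm_le_of_sq_le
    (mul_nonneg (mul_nonneg (by norm_num) (Real.sqrt_nonneg _)) (frobNorm_nonneg _))
  have hM1 : (1:ℝ) ≤ (M:ℝ) := by
    have : 1 ≤ M := Nat.one_le_iff_ne_zero.2 (NeZero.ne M)
    exact_mod_cast this
  have key : ∀ i, ∑ j, ((smax ρ - smax ρ') i j) ^ 2
      ≤ 4 * (M:ℝ) * ∑ j, ((ρ - ρ') i j) ^ 2 := by
    intro i
    set L : ℝ := Real.sqrt (∑ j, ((ρ - ρ') i j) ^ 2) with hLdef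
    have hrow : (0:ℝ) ≤ ∑ j, ((ρ - ρ') i j) ^ 2 :=
      Finset.sum_nonneg fun _ _ => sq_nonneg _
    have hL : ∀ k, |ρ i k - ρ' i k| ≤ L := by
      intro k
      rw [hLdef, ← Real.sqrt_sq_eq_abs]
      apply Real.sqrt_le_sqrt
      exact Finset.single_le_sum (f := fun j => ((ρ - ρ') i j) ^ 2)
        (fun j _ => sq_nonneg _) (mem_univ k)
    have hL0 : 0 ≤ L := Real.sqrt_nonneg _
    have hcoord : ∀ j, |(smax ρ - smax ρ') i j| ≤ |(ρ - ρ') i j| + L := by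
      intro j
      have := softmax_coord_lip (ρ i) (ρ' i) j L hL
      simpa [smax, Matrix.sub_apply] using this
    calc ∑ j, ((smax ρ - smax ρ') i j) ^ 2
        ≤ ∑ j, (|(ρ - ρ') i j| + L) ^ 2 := by
          refine Finset.sum_le_sum fun j _ => ?_
          rw [← sq_abs ((smax ρ - smax ρ') i j)]
          exact pow_le_pow_left₀ (abs_nonneg _) (hcoord j) 2
      _ ≤ ∑ j, (2 * ((ρ - ρ') i j) ^ 2 + 2 * L ^ 2) := by
          refine Finset.sum_le_sum fun j _ => ?_
          have := sq_abs ((ρ - ρ') i j)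
          nlinarith [sq_nonneg (|(ρ - ρ') i j| - L)]
      _ = 2 * (∑ j, ((ρ - ρ') i j) ^ 2) + (M:ℝ) * (2 * L ^ 2) := by
          rw [Finset.sum_add_distrib, Finset.mul_sum, Finset.sum_const, Finset.card_univ,
            Fintype.card_fin, nsmul_eq_mul]
      _ = (2 + 2 * (M:ℝ)) * ∑ j, ((ρ - ρ') i j) ^ 2 := by
          rw [hLdef, Real.sq_sqrt hrow]; ring
      _ ≤ 4 * (M:ℝ) * ∑ j, ((ρ - ρ') i j) ^ 2 := by
          apply mul_le_mul_of_nonneg_right _ hrow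
          nlinarith
  calc ∑ i, ∑ j, ((smax ρ - smax ρ') i j) ^ 2
      ≤ ∑ i, 4 * (M:ℝ) * ∑ j, ((ρ - ρ') i j) ^ 2 := Finset.sum_le_sum fun i _ => key i
    _ = 4 * (M:ℝ) * ∑ i, ∑ j, ((ρ - ρ') i j) ^ 2 := by rw [← Finset.mul_sum]
    _ = (2 * Real.sqrt M * frobNorm (ρ - ρ')) ^ 2 := by
        rw [mul_pow, mul_pow, Real.sq_sqrt (Nat.cast_nonneg M), frobNorm_sq]
        ring

lemma frobNorm_stoch_mul {N M p : ℕ} (S : Matrix (Fin N) (Fin M) ℝ)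
    (B : Matrix (Fin M) (Fin p) ℝ) (h0 : ∀ i j, 0 ≤ S i j) (h1 : ∀ i, ∑ j, S i j = 1) :
    frobNorm (S * B) ≤ Real.sqrt N * frobNorm B := by
  apply frobNorm_le_of_sq_le (mul_nonneg (Real.sqrt_nonneg _) (frobNorm_nonneg _))
  rw [mul_pow, Real.sq_sqrt (Nat.cast_nonneg N)]
  have key : ∀ i, ∑ j, ((S * B) i j) ^ 2 ≤ ∑ k, ∑ j, (B k j) ^ 2 := by
    intro i
    have step1 : ∀ j, ((S * B) i j) ^ 2 ≤ ∑ k, S i k * (B k j) ^ 2 := by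
      intro j
      rw [Matrix.mul_apply]
      have cs2 := Finset.sum_mul_sq_le_sq_mul_sq Finset.univ
        (fun k => Real.sqrt (S i k)) (fun k => Real.sqrt (S i k) * B k j)
      have e1 : ∀ k : Fin M, Real.sqrt (S i k) * (Real.sqrt (S i k) * B k j)
          = S i k * B k j := by
        intro k
        rw [← mul_assoc, Real.mul_self_sqrt (h0 i k)]
      have e2 : ∀ k : Fin M, Real.sqrt (S i k) ^ 2 = S i k := fun k => Real.sq_sqrt (h0 i k)
      have e3 : ∀ k : Fin M, (Real.sqrt (S i k) * B k j) ^ 2 = S i k * (B k j) ^ 2 := by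
        intro k
        rw [mul_pow, Real.sq_sqrt (h0 i k)]
      rw [Finset.sum_congr rfl fun k _ => e1 k, Finset.sum_congr rfl fun k _ => e2 k,
        Finset.sum_congr rfl fun k _ => e3 k, h1 i, one_mul] at cs2
      exact cs2
    calc ∑ j, ((S * B) i j) ^ 2 ≤ ∑ j, ∑ k, S i k * (B k j) ^ 2 :=
          Finset.sum_le_sum fun j _ => step1 j
      _ = ∑ k, S i k * (∑ j, (B k j) ^ 2) := by
          rw [Finset.sum_comm]
          exact Finset.sum_congr rfl fun k _ => by rw [Finset.mul_sum]
      _ ≤ ∑ k, S i k * (∑ k', ∑ j, (B k' j) ^ 2) := by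
          refine Finset.sum_le_sum fun k _ => mul_le_mul_of_nonneg_left ?_ (h0 i k)
          exact Finset.single_le_sum (f := fun k' => ∑ j, (B k' j) ^ 2)
            (fun k' _ => Finset.sum_nonneg fun _ _ => sq_nonneg _) (mem_univ k)
      _ = ∑ k', ∑ j, (B k' j) ^ 2 := by
          rw [← Finset.sum_mul, h1 i, one_mul]
  calc ∑ i, ∑ j, ((S * B) i j) ^ 2 ≤ ∑ _i : Fin N, ∑ k, ∑ j, (B k j) ^ 2 :=
        Finset.sum_le_sum fun i _ => key i
    _ = (N:ℝ) * ∑ k, ∑ j, (B k j) ^ 2 := by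
        rw [Finset.sum_const, Finset.card_univ, Fintype.card_fin, nsmul_eq_mul]
    _ = (N:ℝ) * frobNorm B ^ 2 := by rw [frobNorm_sq]

end Softmax

lemma attn_eq {N D : ℕ} [NeZero N] (W WV : Matrix (Fin D) (Fin D) ℝ)
    (X : Matrix (Fin N) (Fin D) ℝ) :
    attn W WV X = smax (X * W * X.transpose) * (X * WV) := by
  unfold attn
  congr 1
  have hd : ∀ i : Fin N, (0:ℝ) < ∑ j, Real.exp ((X * W * X.transpose) i j) :=
    fun i => Finset.sum_pos (fun _ _ => Real.exp_pos _) univ_nonempty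
  have hinv : (Matrix.diagonal fun i => ∑ j, Real.exp ((X * W * X.transpose) i j))⁻¹
      = Matrix.diagonal fun i => (∑ j, Real.exp ((X * W * X.transpose) i j))⁻¹ := by
    apply Matrix.inv_eq_right_inv
    rw [Matrix.diagonal_mul_diagonal]
    have : (fun i => (∑ j, Real.exp ((X * W * X.transpose) i j))
        * (∑ j, Real.exp ((X * W * X.transpose) i j))⁻¹) = fun _ => (1:ℝ) := by
      funext i
      exact mul_inv_cancel₀ (ne_of_gt (hd i))
    rw [this]
    exact Matrix.diagonal_one
  rw [hinv]
  ext i j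
  rw [Matrix.diagonal_mul, Matrix.of_apply, smax, Matrix.of_apply, div_eq_inv_mul]

set_option maxHeartbeats 1000000 in
/-- Similarity lower bound for the attention module: if ‖W‖, ‖W_V‖, ‖X‖, ‖X̃‖ ≤ R,
‖X − X̃‖ ≤ R₂, and the outputs Y = F(X), Ỹ = F(X̃) have unit Frobenius norm, then
tr[Yᵀ Ỹ] ≥ 1 − (1/2)·(5R⁴ND)²·R₂²·min{N,D}. -/
theorem stmt_10 (N D : ℕ) (hN : 1 ≤ N) (hD : 1 ≤ D) (R R₂ : ℝ) (hR : 1 < R) (hR₂ : 0 ≤ R₂)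
    (W WV : Matrix (Fin D) (Fin D) ℝ) (X Xt : Matrix (Fin N) (Fin D) ℝ)
    (hW : specNorm W ≤ R) (hWV : specNorm WV ≤ R)
    (hX : specNorm X ≤ R) (hXt : specNorm Xt ≤ R)
    (hdiff : specNorm (X - Xt) ≤ R₂)
    (hY : frobNorm (attn W WV X) = 1) (hYt : frobNorm (attn W WV Xt) = 1) :
    Matrix.trace ((attn W WV X).transpose * attn W WV Xt) ≥
      1 - (1 / 2) * (5 * R ^ 4 * (N : ℝ) * (D : ℝ)) ^ 2 * R₂ ^ 2 * min (N : ℝ) (D : ℝ) := by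
  haveI : NeZero N := ⟨Nat.one_le_iff_ne_zero.mp hN⟩
  set Y := attn W WV X with hYdef
  set Yt := attn W WV Xt with hYtdef
  set ρ := X * W * X.transpose with hρdef
  set ρt := Xt * W * Xt.transpose with hρtdef
  have hR0 : (0:ℝ) ≤ R := le_of_lt (lt_trans zero_lt_one hR)
  have hmin0 : (0:ℝ) ≤ min (N:ℝ) (D:ℝ) :=
    le_min (Nat.cast_nonneg N) (Nat.cast_nonneg D)
  set μ : ℝ := Real.sqrt (min (N:ℝ) (D:ℝ)) * R₂ with hμdef
  have hμ0 : 0 ≤ μ := mul_nonneg (Real.sqrt_nonneg _) hR₂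
  have hE : frobNorm (X - Xt) ≤ μ :=
    le_trans (frobNorm_le_sqrt_min _)
      (mul_le_mul_of_nonneg_left hdiff (Real.sqrt_nonneg _))
  -- decomposition
  have hdecomp : Y - Yt = smax ρ * ((X - Xt) * WV) + (smax ρ - smax ρt) * (Xt * WV) := by
    rw [hYdef, hYtdef, attn_eq, attn_eq, ← hρdef, ← hρtdef]
    have e1 : smax ρ * ((X - Xt) * WV) = smax ρ * (X * WV) - smax ρ * (Xt * WV) := by
      rw [Matrix.sub_mul, Matrix.mul_sub]
    have e2 : (smax ρ - smax ρt) * (Xt * WV)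
        = smax ρ * (Xt * WV) - smax ρt * (Xt * WV) := Matrix.sub_mul _ _ _
    rw [e1, e2]
    abel
  -- first term
  have hF1 : frobNorm (smax ρ * ((X - Xt) * WV)) ≤ Real.sqrt N * (μ * R) := by
    refine le_trans (frobNorm_stoch_mul _ _ (smax_nonneg ρ) (smax_row_sum ρ)) ?_
    refine mul_le_mul_of_nonneg_left ?_ (Real.sqrt_nonneg _)
    refine le_trans (frobNorm_mul_le_right _ _) ?_
    exact mul_le_mul hE hWV (specNorm_nonneg _) hμ0
  -- ρ difference
  have hρdiff : frobNorm (ρ - ρt) ≤ μ * (R * R) + R * R * μ := by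
    have hsplit : ρ - ρt = (X - Xt) * (W * X.transpose)
        + Xt * W * (X.transpose - Xt.transpose) := by
      rw [hρdef, hρtdef]
      have e1 : (X - Xt) * (W * X.transpose)
          = X * W * X.transpose - Xt * W * X.transpose := by
        rw [Matrix.sub_mul, Matrix.mul_assoc, Matrix.mul_assoc (Xt)]
      have e2 : Xt * W * (X.transpose - Xt.transpose)
          = Xt * W * X.transpose - Xt * W * Xt.transpose := Matrix.mul_sub _ _ _
      rw [e1, e2]
      abel
    rw [hsplit]
    refine le_trans (frobNorm_add_le _ _) ?_
    have h1 : frobNorm ((X - Xt) * (W * X.transpose)) ≤ μ * (R * R) := by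
      refine le_trans (frobNorm_mul_le_right _ _) ?_
      refine mul_le_mul hE ?_ (specNorm_nonneg _) hμ0
      refine le_trans (specNorm_mul_le _ _) ?_
      rw [specNorm_transpose]
      exact mul_le_mul hW hX (specNorm_nonneg _) hR0
    have h2 : frobNorm (Xt * W * (X.transpose - Xt.transpose)) ≤ R * R * μ := by
      refine le_trans (frobNorm_mul_le_left _ _) ?_
      have ht : X.transpose - Xt.transpose = (X - Xt).transpose := by
        rw [Matrix.transpose_sub]
      refine mul_le_mul ?_ ?_ (frobNorm_nonneg _) (mul_nonneg hR0 hR0)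
      · exact le_trans (specNorm_mul_le _ _)
          (mul_le_mul hXt hW (specNorm_nonneg _) hR0)
      · rw [ht, frobNorm_transpose]
        exact hE
    linarith
  -- second term
  have hF2 : frobNorm ((smax ρ - smax ρt) * (Xt * WV))
      ≤ (2 * Real.sqrt N * (μ * (R * R) + R * R * μ)) * (R * R) := by
    refine le_trans (frobNorm_mul_le_right _ _) ?_
    refine mul_le_mul ?_ ?_ (specNorm_nonneg _) ?_
    · exact le_trans (softmax_frob_lip ρ ρt)
        (mul_le_mul_of_nonneg_left hρdiff
          (mul_nonneg (by norm_num) (Real.sqrt_nonneg _)))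
    · exact le_trans (specNorm_mul_le _ _) (mul_le_mul hXt hWV (specNorm_nonneg _) hR0)
    · positivity
  -- combine
  have hcomb : frobNorm (Y - Yt)
      ≤ Real.sqrt N * (μ * R) + (2 * Real.sqrt N * (μ * (R * R) + R * R * μ)) * (R * R) := by
    rw [hdecomp]
    exact le_trans (frobNorm_add_le _ _) (add_le_add hF1 hF2)
  have hsqrtN : Real.sqrt (N:ℝ) ≤ (N:ℝ) * (D:ℝ) := by
    have hN1 : (1:ℝ) ≤ (N:ℝ) := by exact_mod_cast hN
    have hD1 : (1:ℝ) ≤ (D:ℝ) := by exact_mod_cast hD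
    have hND : (1:ℝ) ≤ (N:ℝ) * (D:ℝ) * (D:ℝ) := by
      nlinarith [mul_le_mul hN1 hD1 zero_le_one (by linarith : (0:ℝ) ≤ (N:ℝ))]
    have hstep : (N:ℝ) ≤ ((N:ℝ) * (D:ℝ)) ^ 2 := by
      nlinarith [mul_le_mul_of_nonneg_left hND (by positivity : (0:ℝ) ≤ (N:ℝ))]
    have : Real.sqrt (N:ℝ) ≤ Real.sqrt (((N:ℝ) * (D:ℝ)) ^ 2) := Real.sqrt_le_sqrt hstep
    rwa [Real.sqrt_sq (by positivity)] at this
  have hfinal : frobNorm (Y - Yt) ≤ 5 * R ^ 4 * (N:ℝ) * (D:ℝ) * μ := by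
    refine le_trans hcomb ?_
    have hs0 : 0 ≤ Real.sqrt (N:ℝ) := Real.sqrt_nonneg _
    have hRR4 : R ≤ R ^ 4 := by nlinarith [sq_nonneg R, sq_nonneg (R - 1), sq_nonneg (R + 1)]
    have key1 : Real.sqrt (N:ℝ) * μ * R ≤ Real.sqrt (N:ℝ) * μ * R ^ 4 :=
      mul_le_mul_of_nonneg_left hRR4 (mul_nonneg hs0 hμ0)
    have key2 : Real.sqrt (N:ℝ) * (μ * R ^ 4) ≤ (N:ℝ) * (D:ℝ) * (μ * R ^ 4) :=
      mul_le_mul_of_nonneg_right hsqrtN (mul_nonneg hμ0 (pow_nonneg hR0 4))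
    nlinarith [key1, key2]
  -- squared bound
  have hsq : ∑ i, ∑ j, ((Y - Yt) i j) ^ 2
      ≤ (5 * R ^ 4 * (N:ℝ) * (D:ℝ)) ^ 2 * R₂ ^ 2 * min (N:ℝ) (D:ℝ) := by
    refine le_trans (sq_le_of_frobNorm_le hfinal) (le_of_eq ?_)
    rw [hμdef, show (5 * R ^ 4 * (N:ℝ) * (D:ℝ) * (Real.sqrt (min (N:ℝ) (D:ℝ)) * R₂)) ^ 2
      = (5 * R ^ 4 * (N:ℝ) * (D:ℝ)) ^ 2 * R₂ ^ 2 * Real.sqrt (min (N:ℝ) (D:ℝ)) ^ 2 from by ring,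
      Real.sq_sqrt hmin0]
  -- trace identity
  have htr : Matrix.trace (Y.transpose * Yt) = ∑ i, ∑ j, Y i j * Yt i j := by
    rw [Matrix.trace]
    simp only [Matrix.diag_apply, Matrix.mul_apply, Matrix.transpose_apply]
    rw [Finset.sum_comm]
  have hexp : ∑ i, ∑ j, ((Y - Yt) i j) ^ 2
      = (∑ i, ∑ j, (Y i j) ^ 2) + (∑ i, ∑ j, (Yt i j) ^ 2)
        - 2 * ∑ i, ∑ j, Y i j * Yt i j := by
    have hrow : ∀ i, ∑ j, ((Y - Yt) i j) ^ 2
        = (∑ j, (Y i j) ^ 2) + (∑ j, (Yt i j) ^ 2) - 2 * ∑ j, Y i j * Yt i j := by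
      intro i
      rw [← Finset.sum_add_distrib, Finset.mul_sum, ← Finset.sum_sub_distrib]
      refine Finset.sum_congr rfl fun j _ => ?_
      rw [Matrix.sub_apply]
      ring
    rw [Finset.sum_congr rfl fun i _ => hrow i, ← Finset.sum_add_distrib,
      Finset.mul_sum, ← Finset.sum_sub_distrib]
  have hSSY : ∑ i, ∑ j, (Y i j) ^ 2 = 1 := by
    rw [← frobNorm_sq, hY, one_pow]
  have hSSYt : ∑ i, ∑ j, (Yt i j) ^ 2 = 1 := by
    rw [← frobNorm_sq, hYt, one_pow]
  rw [ge_iff_le, htr]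
  linarith [hsq, hexp, hSSY, hSSYt]
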